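/- Fix δ ∈ (0, D], ε > 0 and β > 0. There exists a sequence ε''_n → 0 such that for every n, every x ∈ 𝒳^n, and every conditional distribution P*(x̂|x) achieving R(D−δ, P̂_x) whose induced reconstruction distribution Q(x̂) = Σ_{x∈𝒳} P̂_x(x) P*(x̂|x) satisfies min_{x̂∈𝒳̂} Q(x̂) ≥ β, the set T(x) = { x̂ ∈ 𝒳̂^n : Σ_{i=1}^n log₂ ( P*(x̂_i|x_i) / Q(x̂_i) ) ≤ n [R(D−δ, P̂_x) + ε] } satisfies Σ_{x̂ ∉ T(x)} Π_{i=1}^n P*(x̂_i|x_i) ≤ ε''_n. -/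

import Mathlib

open scoped BigOperators Classical
open Filter

section Defs

/-- A probability mass function on a finite alphabet. -/
def IsPMF {α : Type*} [Fintype α] (p : α → ℝ) : Prop :=
  (∀ a, 0 ≤ p a) ∧ ∑ a, p a = 1

/-- A conditional probability mass function (a channel / test channel). -/
def IsCondPMF {α β : Type*} [Fintype α] [Fintype β] (W : α → β → ℝ) : Prop :=
  ∀ a, IsPMF (W a)

/-- Base-2 Kullback–Leibler divergence `D(Q‖P)`. -/
noncomputable def klDiv2 {α : Type*} [Fintype α] (Q P : α → ℝ) : ℝ :=
  ∑ a, Q a * Real.logb 2 (Q a / P a)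

/-- Base-2 mutual information `I(X;X̂)` of the joint law `Q(a) W(b|a)`. -/
noncomputable def mutInf2 {α β : Type*} [Fintype α] [Fintype β]
    (Q : α → ℝ) (W : α → β → ℝ) : ℝ :=
  ∑ a, ∑ b, Q a * W a b * Real.logb 2 (W a b / (∑ a', Q a' * W a' b))

/-- The rate–distortion function `R(D,Q)` (base 2). -/
noncomputable def RD {X Xh : Type*} [Fintype X] [Fintype Xh]
    (d : X → Xh → ℝ) (D : ℝ) (Q : X → ℝ) : ℝ :=
  sInf { r | ∃ V : X → Xh → ℝ, IsCondPMF V ∧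
    (∑ x, ∑ xh, Q x * V x xh * d x xh) ≤ D ∧ r = mutInf2 Q V }

/-- Empirical distribution of a sequence. -/
noncomputable def empDist {X : Type*} [Fintype X] {n : ℕ} (x : Fin n → X) : X → ℝ :=
  fun a => ((Finset.univ.filter (fun i => x i = a)).card : ℝ) / n

/-- Base-2 empirical entropy of a sequence. -/
noncomputable def empEnt {X : Type*} [Fintype X] {n : ℕ} (x : Fin n → X) : ℝ :=
  - ∑ a, empDist x a * Real.logb 2 (empDist x a)

/-- Additive (per-block) distortion between sequences. -/
noncomputable def dSeq {X Xh : Type*} {n : ℕ} (d : X → Xh → ℝ)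
    (x : Fin n → X) (xh : Fin n → Xh) : ℝ :=
  ∑ i, d (x i) (xh i)

/-- The universal guessing distribution `P̃(x̂) ∝ 2^{-n Ĥ_x̂}` on `𝒳̂ⁿ`. -/
noncomputable def univDist {Xh : Type*} [Fintype Xh] {n : ℕ} (xh : Fin n → Xh) : ℝ :=
  (2 : ℝ) ^ (-(n : ℝ) * empEnt xh) / ∑ z : Fin n → Xh, (2 : ℝ) ^ (-(n : ℝ) * empEnt z)

/-- Probability of the distortion ball `S(x)` under the universal distribution. -/
noncomputable def univDistBall {X Xh : Type*} [Fintype Xh] {n : ℕ}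
    (d : X → Xh → ℝ) (D : ℝ) (x : Fin n → X) : ℝ :=
  ∑ xh ∈ Finset.univ.filter (fun xh : Fin n → Xh => dSeq d x xh ≤ (n : ℝ) * D), univDist xh

end Defs

/-! Auxiliary lemmas -/

lemma aux_sum_comp_count {X : Type*} [Fintype X] {n : ℕ} (x : Fin n → X) (h : X → ℝ) :
    ∑ i, h (x i) = ∑ a, ((Finset.univ.filter (fun i => x i = a)).card : ℝ) * h a := by
  classical
  rw [← Finset.sum_fiberwise Finset.univ x (fun i => h (x i))]
  refine Finset.sum_congr rfl fun a _ => ?_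
  rw [Finset.sum_congr rfl (fun i hi => by rw [(Finset.mem_filter.1 hi).2]),
    Finset.sum_const, nsmul_eq_mul]

lemma aux_mul_sq_log_le {t : ℝ} (h0 : 0 < t) (h1 : t ≤ 1) :
    t * (Real.log t)^2 ≤ 4 := by
  have hs : 0 < Real.sqrt t := Real.sqrt_pos.2 h0
  have hlog : Real.log t = 2 * Real.log (Real.sqrt t) := by
    rw [Real.log_sqrt h0.le]; ring
  have h2 : Real.log (1 / Real.sqrt t) ≤ 1 / Real.sqrt t - 1 :=
    Real.log_le_sub_one_of_pos (by positivity)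
  have h3 : Real.log (1 / Real.sqrt t) = - Real.log (Real.sqrt t) := by
    rw [Real.log_div one_ne_zero (ne_of_gt hs), Real.log_one]; ring
  have h4 : 0 ≤ - Real.log (Real.sqrt t) := by
    rw [← h3]; apply Real.log_nonneg
    rw [le_div_iff₀ hs, one_mul]
    exact Real.sqrt_le_one.2 h1
  have h5 : (- Real.log (Real.sqrt t))^2 ≤ (1 / Real.sqrt t)^2 := by
    apply pow_le_pow_left₀ h4; linarith [h3 ▸ h2]
  have h6 : (1 / Real.sqrt t)^2 = 1 / t := by
    rw [div_pow, one_pow, Real.sq_sqrt h0.le]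
  have h7 : (Real.log t)^2 ≤ 4 / t := by
    rw [hlog]
    have h8 : (-Real.log (Real.sqrt t))^2 ≤ 1/t := h6 ▸ h5
    have h9 : (2 * Real.log (Real.sqrt t))^2 = 4 * (-Real.log (Real.sqrt t))^2 := by ring
    rw [h9, div_eq_mul_one_div]
    nlinarith
  calc t * (Real.log t)^2 ≤ t * (4 / t) := by
        apply mul_le_mul_of_nonneg_left h7 h0.le
    _ = 4 := by field_simp

set_option maxHeartbeats 1000000 in
lemma aux_cross_term {n : ℕ} {Xh : Type*} [Fintype Xh]
    (p f : Fin n → Xh → ℝ) (i j : Fin n) :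
    ∑ ω : Fin n → Xh, (∏ k, p k (ω k)) * f i (ω i) * f j (ω j)
      = ∏ k, ∑ b, (p k b * (if k = i then f i b else 1) * (if k = j then f j b else 1)) := by
  calc ∑ ω : Fin n → Xh, (∏ k, p k (ω k)) * f i (ω i) * f j (ω j)
      = ∑ ω : Fin n → Xh, ∏ k, (p k (ω k) * (if k = i then f i (ω k) else 1)
          * (if k = j then f j (ω k) else 1)) := by
        refine Finset.sum_congr rfl fun ω _ => ?_
        rw [Finset.prod_mul_distrib, Finset.prod_mul_distrib]
        rw [Finset.prod_ite_eq' Finset.univ i (fun k => f i (ω k)),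
            Finset.prod_ite_eq' Finset.univ j (fun k => f j (ω k))]
        simp
    _ = ∏ k, ∑ b, (p k b * (if k = i then f i b else 1) * (if k = j then f j b else 1)) :=
        (Fintype.prod_sum (fun k b => p k b * (if k = i then f i b else 1)
          * (if k = j then f j b else 1))).symm

lemma aux_second_moment_bound {n : ℕ} {Xh : Type*} [Fintype Xh]
    (p : Fin n → Xh → ℝ) (hp1 : ∀ i, ∑ b, p i b = 1)
    (f : Fin n → Xh → ℝ) (hmean : ∀ i, ∑ b, p i b * f i b = 0)
    (C : ℝ) (hvar : ∀ i, ∑ b, p i b * (f i b)^2 ≤ C) :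
    ∑ ω : Fin n → Xh, (∏ k, p k (ω k)) * (∑ i, f i (ω i))^2 ≤ n * C := by
  have expand : ∀ ω : Fin n → Xh,
      (∏ k, p k (ω k)) * (∑ i, f i (ω i))^2
        = ∑ i, ∑ j, (∏ k, p k (ω k)) * f i (ω i) * f j (ω j) := by
    intro ω
    rw [sq, Finset.sum_mul_sum, Finset.mul_sum]
    refine Finset.sum_congr rfl fun i _ => ?_
    rw [Finset.mul_sum]
    refine Finset.sum_congr rfl fun j _ => ?_
    ring
  calc ∑ ω : Fin n → Xh, (∏ k, p k (ω k)) * (∑ i, f i (ω i))^2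
      = ∑ i, ∑ j, ∑ ω : Fin n → Xh, (∏ k, p k (ω k)) * f i (ω i) * f j (ω j) := by
        rw [Finset.sum_congr rfl fun ω _ => expand ω, Finset.sum_comm]
        refine Finset.sum_congr rfl fun i _ => Finset.sum_comm
    _ ≤ ∑ i : Fin n, C := by
        apply Finset.sum_le_sum
        intro i _
        have hdiag : ∑ ω : Fin n → Xh, (∏ k, p k (ω k)) * f i (ω i) * f i (ω i) ≤ C := by
          rw [aux_cross_term]
          have heq : ∏ k, ∑ b, (p k b * (if k = i then f i b else 1)
              * (if k = i then f i b else 1)) = ∑ b, p i b * (f i b)^2 := by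
            rw [Finset.prod_eq_single_of_mem i (Finset.mem_univ i)]
            · refine Finset.sum_congr rfl fun b _ => ?_
              rw [if_pos rfl]; ring
            · intro k _ hk
              simp only [if_neg hk, mul_one]
              exact hp1 k
          rw [heq]; exact hvar i
        have hoff : ∀ j, j ≠ i →
            ∑ ω : Fin n → Xh, (∏ k, p k (ω k)) * f i (ω i) * f j (ω j) = 0 := by
          intro j hj
          rw [aux_cross_term]
          apply Finset.prod_eq_zero (Finset.mem_univ j)
          have heq : ∀ b, p j b * (if j = i then f i b else 1) * (if j = j then f j b else 1)
              = p j b * f j b := by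
            intro b; simp [hj]
          rw [Finset.sum_congr rfl fun b _ => heq b]
          exact hmean j
        rw [Finset.sum_eq_single_of_mem i (Finset.mem_univ i) (fun j _ hj => hoff j hj)]
        exact hdiag
    _ = n * C := by simp [mul_comm]

lemma aux_finite_chebyshev {n : ℕ} {Xh : Type*} [Fintype Xh]
    (p : Fin n → Xh → ℝ) (hp0 : ∀ i b, 0 ≤ p i b) (hp1 : ∀ i, ∑ b, p i b = 1)
    (f : Fin n → Xh → ℝ) (hmean : ∀ i, ∑ b, p i b * f i b = 0)
    (C : ℝ) (hvar : ∀ i, ∑ b, p i b * (f i b)^2 ≤ C)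
    (t : ℝ) (ht : 0 < t) :
    ∑ ω ∈ Finset.univ.filter (fun ω : Fin n → Xh => t < ∑ i, f i (ω i)),
      ∏ k, p k (ω k) ≤ n * C / t^2 := by
  have hP0 : ∀ ω : Fin n → Xh, 0 ≤ ∏ k, p k (ω k) := fun ω =>
    Finset.prod_nonneg fun k _ => hp0 k (ω k)
  have key : (∑ ω ∈ Finset.univ.filter (fun ω : Fin n → Xh => t < ∑ i, f i (ω i)),
      ∏ k, p k (ω k)) * t^2 ≤ n * C := by
    calc (∑ ω ∈ Finset.univ.filter (fun ω : Fin n → Xh => t < ∑ i, f i (ω i)),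
        ∏ k, p k (ω k)) * t^2
        = ∑ ω ∈ Finset.univ.filter (fun ω : Fin n → Xh => t < ∑ i, f i (ω i)),
            (∏ k, p k (ω k)) * t^2 := by rw [Finset.sum_mul]
      _ ≤ ∑ ω ∈ Finset.univ.filter (fun ω : Fin n → Xh => t < ∑ i, f i (ω i)),
            (∏ k, p k (ω k)) * (∑ i, f i (ω i))^2 := by
          apply Finset.sum_le_sum
          intro ω hω
          have hω' := (Finset.mem_filter.1 hω).2
          apply mul_le_mul_of_nonneg_left _ (hP0 ω)
          nlinarith
      _ ≤ ∑ ω : Fin n → Xh, (∏ k, p k (ω k)) * (∑ i, f i (ω i))^2 := by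
          apply Finset.sum_le_sum_of_subset_of_nonneg (Finset.filter_subset _ _)
          intro ω _ _
          exact mul_nonneg (hP0 ω) (sq_nonneg _)
      _ ≤ n * C := aux_second_moment_bound p hp1 f hmean C hvar
  rw [le_div_iff₀ (by positivity : (0:ℝ) < t^2)]
  exact key
set_option maxHeartbeats 2000000 in
/-- Fix `δ ∈ (0,D]`, `ε > 0` and `β > 0`. There is a sequence `ε''_n → 0`
such that for every `n`, every `x ∈ 𝒳ⁿ`, and every conditional distribution `P*` achieving
`R(D−δ, P̂_x)` whose induced reconstruction distribution `Q(x̂) = Σ_x P̂_x(x)P*(x̂|x)` satisfies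
`min_x̂ Q(x̂) ≥ β`, the complement of
`T(x) = {x̂ : Σᵢ log₂(P*(x̂ᵢ|xᵢ)/Q(x̂ᵢ)) ≤ n[R(D−δ,P̂_x)+ε]}` has conditional probability
`Σ_{x̂ ∉ T(x)} Πᵢ P*(x̂ᵢ|xᵢ) ≤ ε''_n`. -/
theorem typical_set_complement_upper_bound
    {X Xh : Type*} [Fintype X] [Fintype Xh]
    (d : X → Xh → ℝ) (hd : ∀ x xh, 0 ≤ d x xh) (D : ℝ)
    (δ : ℝ) (hδ : 0 < δ) (hδD : δ ≤ D) (ε : ℝ) (hε : 0 < ε) (β : ℝ) (hβ : 0 < β) :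
    ∃ εseq : ℕ → ℝ, Tendsto εseq atTop (nhds 0) ∧
      ∀ (n : ℕ) (x : Fin n → X) (Pstar : X → Xh → ℝ),
        IsCondPMF Pstar →
        (∑ a, ∑ b, empDist x a * Pstar a b * d a b) ≤ D - δ →
        mutInf2 (empDist x) Pstar = RD d (D - δ) (empDist x) →
        (∀ b : Xh, β ≤ ∑ a, empDist x a * Pstar a b) →
        (∑ xh ∈ Finset.univ.filter (fun xh : Fin n → Xh =>
            ¬ ((∑ i, Real.logb 2
                  (Pstar (x i) (xh i) / (∑ a, empDist x a * Pstar a (xh i)))) ≤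
                (n : ℝ) * (RD d (D - δ) (empDist x) + ε))),
          ∏ i, Pstar (x i) (xh i)) ≤ εseq n := by
  classical
  set K : ℝ := 4 / (Real.log 2)^2 with hKdef
  have hlog2 : (0:ℝ) < Real.log 2 := Real.log_pos (by norm_num)
  have hK0 : 0 ≤ K := by positivity
  set C : ℝ := (Fintype.card Xh : ℝ) * (2 * K + 2 * (Real.logb 2 β)^2) with hCdef
  have hC0 : 0 ≤ C := by positivity
  refine ⟨fun n => 2 * C / (ε^2 * (n+1)), ?_, ?_⟩
  · have h1 : Tendsto (fun n : ℕ => (2*C/ε^2) * (1/((n:ℝ)+1))) atTop (nhds ((2*C/ε^2) * 0)) :=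
      tendsto_one_div_add_atTop_nhds_zero_nat.const_mul _
    rw [mul_zero] at h1
    refine h1.congr fun n => ?_
    rw [div_mul_div_comm, mul_one]
  · intro n x Pstar hPstar hdist hach hβQ
    rcases Nat.eq_zero_or_pos n with hn | hn
    · subst hn
      have hempty : (Finset.univ.filter (fun xh : Fin 0 → Xh =>
          ¬ ((∑ i, Real.logb 2
                (Pstar (x i) (xh i) / (∑ a, empDist x a * Pstar a (xh i)))) ≤
              ((0:ℕ) : ℝ) * (RD d (D - δ) (empDist x) + ε)))) = ∅ := by
        apply Finset.filter_eq_empty_iff.2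
        intro ω _
        simp
      rw [hempty, Finset.sum_empty]
      positivity
    -- main case n ≥ 1
    have hn0 : ((n:ℝ)) ≠ 0 := Nat.cast_ne_zero.2 hn.ne'
    have hn' : (0:ℝ) < n := Nat.cast_pos.2 hn
    have hn1 : (1:ℝ) ≤ n := by exact_mod_cast hn
    have hXh : Nonempty Xh := by
      by_contra h
      rw [not_nonempty_iff] at h
      have h1 := (hPstar (x ⟨0, hn⟩)).2
      rw [Finset.univ_eq_empty, Finset.sum_empty] at h1
      norm_num at h1
    -- basic facts about empDist and Q
    have hemp0 : ∀ a, 0 ≤ empDist x a := by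
      intro a; unfold empDist; positivity
    have hcard : ∑ a, ((Finset.univ.filter (fun i => x i = a)).card : ℝ) = n := by
      have h1 := aux_sum_comp_count x (fun _ => (1:ℝ))
      simpa using h1.symm
    have hempsum : ∑ a, empDist x a = 1 := by
      unfold empDist
      rw [← Finset.sum_div, hcard, div_self hn0]
    have hQ0 : ∀ b, 0 < ∑ a, empDist x a * Pstar a b := fun b =>
      lt_of_lt_of_le hβ (hβQ b)
    have hQsum : ∑ b, ∑ a, empDist x a * Pstar a b = 1 := by
      rw [Finset.sum_comm]
      calc ∑ a, ∑ b, empDist x a * Pstar a b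
          = ∑ a, empDist x a * ∑ b, Pstar a b := by
            refine Finset.sum_congr rfl fun a _ => (Finset.mul_sum _ _ _).symm
        _ = ∑ a, empDist x a := by
            refine Finset.sum_congr rfl fun a _ => by rw [(hPstar a).2, mul_one]
        _ = 1 := hempsum
    have hQ1 : ∀ b, (∑ a, empDist x a * Pstar a b) ≤ 1 := by
      intro b
      rw [← hQsum]
      exact Finset.single_le_sum (fun b' _ => (hQ0 b').le) (Finset.mem_univ b)
    have hβ1 : β ≤ 1 := le_trans (hβQ (Classical.arbitrary Xh)) (hQ1 _)
    -- the per-letter log-likelihood ratio and its mean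
    set ℓ : Fin n → Xh → ℝ := fun i b =>
      Real.logb 2 (Pstar (x i) b / (∑ a, empDist x a * Pstar a b)) with hldef
    set m : Fin n → ℝ := fun i => ∑ b, Pstar (x i) b * ℓ i b with hmdef
    have hmean : ∀ i, ∑ b, Pstar (x i) b * (ℓ i b - m i) = 0 := by
      intro i
      have h1 : ∀ b, Pstar (x i) b * (ℓ i b - m i)
          = Pstar (x i) b * ℓ i b - Pstar (x i) b * m i := fun b => by ring
      rw [Finset.sum_congr rfl fun b _ => h1 b, Finset.sum_sub_distrib,
        ← Finset.sum_mul, (hPstar (x i)).2, one_mul]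
      exact sub_eq_zero_of_eq rfl
    -- per-term second moment bound
    have hterm : ∀ i b, Pstar (x i) b * (ℓ i b)^2 ≤ 2*K + 2*(Real.logb 2 β)^2 := by
      intro i b
      have ht0 : 0 ≤ Pstar (x i) b := (hPstar (x i)).1 b
      have ht1 : Pstar (x i) b ≤ 1 := by
        rw [← (hPstar (x i)).2]
        exact Finset.single_le_sum (fun b' _ => (hPstar (x i)).1 b') (Finset.mem_univ b)
      rcases eq_or_lt_of_le ht0 with h | h
      · rw [← h, zero_mul]; positivity
      · have hQb := hQ0 b
        have hsplit : ℓ i b = Real.logb 2 (Pstar (x i) b)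
            - Real.logb 2 (∑ a, empDist x a * Pstar a b) := by
          rw [hldef]
          exact Real.logb_div (ne_of_gt h) (ne_of_gt hQb)
        have h1 : Pstar (x i) b * (Real.logb 2 (Pstar (x i) b))^2 ≤ K := by
          have h4 := aux_mul_sq_log_le h ht1
          rw [Real.logb, div_pow, hKdef]
          rw [show Pstar (x i) b * ((Real.log (Pstar (x i) b))^2 / (Real.log 2)^2)
            = Pstar (x i) b * (Real.log (Pstar (x i) b))^2 / (Real.log 2)^2 from by ring]
          gcongr
        have hQle : Real.logb 2 β ≤ Real.logb 2 (∑ a, empDist x a * Pstar a b) :=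
          Real.logb_le_logb_of_le (by norm_num) hβ (hβQ b)
        have hQneg : Real.logb 2 (∑ a, empDist x a * Pstar a b) ≤ 0 :=
          Real.logb_nonpos (by norm_num) (hQ0 b).le (hQ1 b)
        have h2 : (Real.logb 2 (∑ a, empDist x a * Pstar a b))^2 ≤ (Real.logb 2 β)^2 := by
          nlinarith
        rw [hsplit]
        nlinarith [sq_nonneg (Real.logb 2 (Pstar (x i) b)
          + Real.logb 2 (∑ a, empDist x a * Pstar a b)),
          sq_nonneg (Real.logb 2 (∑ a, empDist x a * Pstar a b)),
          mul_le_mul_of_nonneg_left h2 ht0]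
    -- per-letter variance bound
    have hvar : ∀ i, ∑ b, Pstar (x i) b * (ℓ i b - m i)^2 ≤ C := by
      intro i
      have hexp : ∑ b, Pstar (x i) b * (ℓ i b - m i)^2
          = (∑ b, Pstar (x i) b * (ℓ i b)^2) - (m i)^2 := by
        have h1 : ∀ b, Pstar (x i) b * (ℓ i b - m i)^2
            = Pstar (x i) b * (ℓ i b)^2 - 2 * m i * (Pstar (x i) b * ℓ i b)
              + (m i)^2 * Pstar (x i) b := fun b => by ring
        rw [Finset.sum_congr rfl fun b _ => h1 b, Finset.sum_add_distrib,
          Finset.sum_sub_distrib, ← Finset.mul_sum, ← Finset.mul_sum,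
          (hPstar (x i)).2]
        have hm : ∑ b, Pstar (x i) b * ℓ i b = m i := rfl
        rw [hm]
        ring
      rw [hexp]
      have h2 : ∑ b, Pstar (x i) b * (ℓ i b)^2 ≤ C := by
        calc ∑ b, Pstar (x i) b * (ℓ i b)^2
            ≤ ∑ _b : Xh, (2*K + 2*(Real.logb 2 β)^2) :=
              Finset.sum_le_sum fun b _ => hterm i b
          _ = C := by rw [Finset.sum_const, nsmul_eq_mul, hCdef, Finset.card_univ]
      nlinarith [sq_nonneg (m i)]
    -- the mean of the total log-likelihood is n * R
    have hmeansum : ∑ i, m i = (n:ℝ) * RD d (D - δ) (empDist x) := by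
      rw [← hach]
      have h1 : ∑ i, m i = ∑ a, ((Finset.univ.filter (fun i => x i = a)).card : ℝ)
          * (∑ b, Pstar a b * Real.logb 2 (Pstar a b / (∑ a', empDist x a' * Pstar a' b))) := by
        have h0 : ∀ i, m i = (fun a => ∑ b, Pstar a b
            * Real.logb 2 (Pstar a b / (∑ a', empDist x a' * Pstar a' b))) (x i) := fun i => rfl
        rw [Finset.sum_congr rfl fun i _ => h0 i]
        exact aux_sum_comp_count x (fun a => ∑ b, Pstar a b
          * Real.logb 2 (Pstar a b / (∑ a', empDist x a' * Pstar a' b)))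
      have h2 : (n:ℝ) * mutInf2 (empDist x) Pstar
          = ∑ a, ((Finset.univ.filter (fun i => x i = a)).card : ℝ)
          * (∑ b, Pstar a b * Real.logb 2 (Pstar a b / (∑ a', empDist x a' * Pstar a' b))) := by
        unfold mutInf2 empDist
        rw [Finset.mul_sum]
        refine Finset.sum_congr rfl fun a _ => ?_
        rw [Finset.mul_sum, Finset.mul_sum]
        refine Finset.sum_congr rfl fun b _ => ?_
        field_simp
      rw [h1, h2]
    -- rewrite the filter and apply Chebyshev
    have hfilter : (Finset.univ.filter (fun xh : Fin n → Xh =>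
          ¬ ((∑ i, Real.logb 2
                (Pstar (x i) (xh i) / (∑ a, empDist x a * Pstar a (xh i)))) ≤
              (n : ℝ) * (RD d (D - δ) (empDist x) + ε))))
        = Finset.univ.filter (fun ω : Fin n → Xh =>
            (n:ℝ)*ε < ∑ i, (ℓ i (ω i) - m i)) := by
      apply Finset.filter_congr
      intro ω _
      have hsum : ∑ i, (ℓ i (ω i) - m i)
          = (∑ i, ℓ i (ω i)) - (n:ℝ) * RD d (D - δ) (empDist x) := by
        rw [Finset.sum_sub_distrib, hmeansum]
      have hll : (∑ i, Real.logb 2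
            (Pstar (x i) (ω i) / (∑ a, empDist x a * Pstar a (ω i))))
          = ∑ i, ℓ i (ω i) := rfl
      rw [hll, not_le]
      constructor
      · intro hlt; rw [hsum]; nlinarith
      · intro hlt; nlinarith [hsum]
    rw [hfilter]
    have hcheb := aux_finite_chebyshev (fun i b => Pstar (x i) b)
      (fun i b => (hPstar (x i)).1 b) (fun i => (hPstar (x i)).2)
      (fun i b => ℓ i b - m i) hmean C hvar ((n:ℝ)*ε) (by positivity)
    refine le_trans hcheb ?_
    rw [div_le_div_iff₀ (by positivity) (by positivity)]
    have hfin : 0 ≤ C * ε^2 * ((n:ℝ) - 1) * (n:ℝ) :=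
      mul_nonneg (mul_nonneg (mul_nonneg hC0 (sq_nonneg ε)) (by linarith)) hn'.le
    nlinarith [hfin]
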